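/- In a commutative semiring (D, +, ×, 0, 1), for annotated relations R over schema S_R and T over schema S_T, and any attribute A ∈ S_R with A ∉ S_T, marginalization distributes over join: Σ_A (R ⋈ T) = (Σ_A R) ⋈ T, where (R ⋈ T)(t) = R(π_{S_R}(t)) × T(π_{S_T}(t)) and (Σ_A R)(t) = Σ {R(t₁) : π_{S_R∖{A}}(t₁) = t}. -/
import Mathlib


open Finset

variable {Att : Type*} [Fintype Att] [DecidableEq Att]
variable {Val : Att → Type*} [∀ a, Fintype (Val a)] [∀ a, DecidableEq (Val a)]
variable {D : Type*} [CommSemiring D]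

/-- `R` depends only on the attributes in schema `S`. -/
def DependsOnlyOn (R : (∀ a, Val a) → D) (S : Finset Att) : Prop :=
  ∀ t₁ t₂ : ∀ a, Val a, (∀ a ∈ S, t₁ a = t₂ a) → R t₁ = R t₂

/-- Join of annotated relations: multiply the annotations. -/
def joinRel (R T : (∀ a, Val a) → D) : (∀ a, Val a) → D := fun t => R t * T t

/-- Marginalize out a single attribute `A`: sum over all values of `A`. -/
def marg (A : Att) (R : (∀ a, Val a) → D) : (∀ a, Val a) → D :=
  fun t => ∑ v : Val A, R (Function.update t A v)

/-- Marginalize out all attributes in `E`. -/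
def margOver (E : Finset Att) (R : (∀ a, Val a) → D) : (∀ a, Val a) → D :=
  fun t => ∑ s : ∀ a, Val a, if ∀ a, a ∉ E → s a = t a then R s else 0

/-- Selection on attribute `A`: zero out annotations of tuples failing `p`. -/
def select (A : Att) (p : Val A → Prop) [DecidablePred p] (R : (∀ a, Val a) → D) :
    (∀ a, Val a) → D :=
  fun t => if p (t A) then R t else 0

/-- Marginalization over an attribute `A` of `R`'s schema that does not occur in
`T`'s schema distributes over the join: `Σ_A (R ⋈ T) = (Σ_A R) ⋈ T`. -/
theorem marg_join_pushdown (R T : (∀ a, Val a) → D) (SR ST : Finset Att)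
    (hR : DependsOnlyOn R SR) (hT : DependsOnlyOn T ST)
    (A : Att) (hA : A ∈ SR) (hA' : A ∉ ST) :
    marg A (joinRel R T) = joinRel (marg A R) T := by
  funext t
  simp only [marg, joinRel]
  have hTv : ∀ v : Val A, T (Function.update t A v) = T t := fun v =>
    hT _ _ fun a ha => Function.update_of_ne (by rintro rfl; exact hA' ha) _ _
  simp only [hTv]
  rw [← Finset.sum_mul]
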